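/- Let M = (E, I) be a matroid, let {X_e}_{e∈E} be independent {0,1}-valued random variables with success probabilities p_e, and let S = {e : X_e = 1}. For any δ ∈ (0,1), Pr[rank(S) ≤ (1-δ)·E[rank(S)]] ≤ e^{-δ² E[rank(S)]/2}. -/

import Mathlib

open scoped Classical

/-- A matroid on a finite ground set, given by its independent sets. -/
structure FinMatroid (α : Type*) [DecidableEq α] [Fintype α] where
  Indep : Finset α → Prop
  empty_indep : Indep ∅
  subset_indep : ∀ ⦃I J : Finset α⦄, Indep J → I ⊆ J → Indep I
  exchange : ∀ ⦃I J : Finset α⦄, Indep I → Indep J → I.card < J.card →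
    ∃ e ∈ J \ I, Indep (insert e I)

/-- The rank of a set: the size of a largest independent subset. -/
noncomputable def FinMatroid.rank {α : Type*} [DecidableEq α] [Fintype α]
    (M : FinMatroid α) (S : Finset α) : ℕ :=
  (S.powerset.filter (fun I => M.Indep I)).sup Finset.card

/-- Probability that the random set of active elements (each element `e` active
independently with probability `p e`) equals `A`. -/
noncomputable def subsetWeight {α : Type*} [DecidableEq α] [Fintype α]
    (p : α → ℝ) (A : Finset α) : ℝ :=
  (∏ e ∈ A, p e) * ∏ e ∈ Finset.univ \ A, (1 - p e)

/-- `E[rank(S)]` for the random set `S` of active elements. -/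
noncomputable def expRank {α : Type*} [DecidableEq α] [Fintype α]
    (M : FinMatroid α) (p : α → ℝ) : ℝ :=
  ∑ A : Finset α, subsetWeight p A * (M.rank A : ℝ)

section Aux

variable {α : Type*} [DecidableEq α] [Fintype α]

namespace FinMatroid

variable (M : FinMatroid α)

lemma card_le_rank {I S : Finset α} (hI : M.Indep I) (hIS : I ⊆ S) : I.card ≤ M.rank S :=
  Finset.le_sup (by simp [Finset.mem_filter, Finset.mem_powerset, hIS, hI])

lemma exists_max_indep (S : Finset α) : ∃ I, I ⊆ S ∧ M.Indep I ∧ I.card = M.rank S := by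
  have hne : (S.powerset.filter (fun I => M.Indep I)).Nonempty :=
    ⟨∅, by simp [M.empty_indep]⟩
  obtain ⟨I, hI, hEq⟩ := Finset.exists_mem_eq_sup _ hne Finset.card
  simp only [Finset.mem_filter, Finset.mem_powerset] at hI
  exact ⟨I, hI.1, hI.2, hEq.symm⟩

lemma rank_mono {S T : Finset α} (h : S ⊆ T) : M.rank S ≤ M.rank T := by
  obtain ⟨I, hIS, hInd, hcard⟩ := M.exists_max_indep S
  rw [← hcard]
  exact M.card_le_rank hInd (hIS.trans h)

lemma rank_empty : M.rank ∅ = 0 := by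
  obtain ⟨I, hIS, _, hcard⟩ := M.exists_max_indep ∅
  rw [← hcard, Finset.subset_empty.mp hIS, Finset.card_empty]

lemma rank_insert_le (e : α) (S : Finset α) : M.rank (insert e S) ≤ M.rank S + 1 := by
  obtain ⟨I, hIS, hInd, hcard⟩ := M.exists_max_indep (insert e S)
  rw [← hcard]
  have h1 : I \ {e} ⊆ S := by
    intro x hx
    rw [Finset.mem_sdiff, Finset.mem_singleton] at hx
    have := hIS hx.1
    rw [Finset.mem_insert] at this
    tauto
  have h2 : M.Indep (I \ {e}) := M.subset_indep hInd Finset.sdiff_subset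
  have h3 := M.card_le_rank h2 h1
  have h4 : I.card ≤ (I \ {e}).card + ({e} : Finset α).card :=
    Finset.card_le_card_sdiff_add_card
  rw [Finset.card_singleton] at h4
  omega

lemma exists_extend : ∀ (n : ℕ) (I J : Finset α), M.Indep I → M.Indep J →
    I.card + n = J.card →
    ∃ L, M.Indep L ∧ I ⊆ L ∧ L ⊆ I ∪ J ∧ L.card = J.card := by
  intro n
  induction n with
  | zero =>
    intro I J hI _ h
    exact ⟨I, hI, Finset.Subset.refl I, Finset.subset_union_left, by omega⟩
  | succ n ih =>
    intro I J hI hJ h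
    obtain ⟨e, he, hInd⟩ := M.exchange hI hJ (by omega)
    rw [Finset.mem_sdiff] at he
    obtain ⟨L, hL, hIL, hLsub, hcard⟩ := ih (insert e I) J hInd hJ
      (by rw [Finset.card_insert_of_notMem he.2]; omega)
    refine ⟨L, hL, (Finset.subset_insert e I).trans hIL, hLsub.trans ?_, hcard⟩
    intro x hx
    rw [Finset.mem_union, Finset.mem_insert] at hx
    rw [Finset.mem_union]
    rcases hx with (rfl | hx) | hx
    · exact Or.inr he.1
    · exact Or.inl hx
    · exact Or.inr hx

lemma rank_insert_eq_of_subset {e : α} {C D : Finset α}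
    (hCD : C ⊆ D) (h : M.rank (insert e C) = M.rank C) :
    M.rank (insert e D) = M.rank D := by
  refine le_antisymm ?_ (M.rank_mono (Finset.subset_insert e D))
  by_cases heD : e ∈ D
  · rw [Finset.insert_eq_self.mpr heD]
  obtain ⟨J, hJsub, hJ, hJcard⟩ := M.exists_max_indep (insert e D)
  obtain ⟨K, hKsub, hK, hKcard⟩ := M.exists_max_indep C
  rw [← hJcard]
  by_cases hcards : J.card ≤ K.card
  · calc J.card ≤ K.card := hcards
    _ = M.rank C := hKcard
    _ ≤ M.rank D := M.rank_mono hCD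
  push_neg at hcards
  obtain ⟨L, hL, hKL, hLsub, hLcard⟩ :=
    M.exists_extend (J.card - K.card) K J hK hJ (by omega)
  by_cases heL : e ∈ L
  · exfalso
    have heK : e ∉ K := fun hh => heD (hCD (hKsub hh))
    have hind : M.Indep (insert e K) := by
      refine M.subset_indep hL ?_
      intro x hx
      rw [Finset.mem_insert] at hx
      rcases hx with rfl | hx
      · exact heL
      · exact hKL hx
    have h1 := M.card_le_rank hind (Finset.insert_subset_insert e hKsub)
    rw [Finset.card_insert_of_notMem heK] at h1
    omega
  · have hLD : L ⊆ D := by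
      intro x hx
      have h2 := hLsub hx
      rw [Finset.mem_union] at h2
      rcases h2 with h2 | h2
      · exact hCD (hKsub h2)
      · have h3 := hJsub h2
        rw [Finset.mem_insert] at h3
        rcases h3 with rfl | h3
        · exact absurd hx heL
        · exact h3
    have := M.card_le_rank hL hLD
    omega

end FinMatroid

/-- The weight of `A` when the ground set being randomized is `R`. -/
noncomputable def wt (p : α → ℝ) (R A : Finset α) : ℝ :=
  (∏ e ∈ A, p e) * ∏ e ∈ R \ A, (1 - p e)

lemma wt_nonneg {p : α → ℝ} (hp : ∀ e, 0 ≤ p e ∧ p e ≤ 1) (R A : Finset α) :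
    0 ≤ wt p R A :=
  mul_nonneg (Finset.prod_nonneg fun e _ => (hp e).1)
    (Finset.prod_nonneg fun e _ => by linarith [(hp e).2])

lemma wt_sum (p : α → ℝ) (R : Finset α) : ∑ A ∈ R.powerset, wt p R A = 1 := by
  have h := Finset.prod_add p (fun e => 1 - p e) R
  simp only [wt]
  rw [← h]
  simp

lemma wt_split {p : α → ℝ} {e : α} {R : Finset α} (he : e ∉ R) (g : Finset α → ℝ) :
    ∑ A ∈ (insert e R).powerset, wt p (insert e R) A * g A =
      (1 - p e) * ∑ A ∈ R.powerset, wt p R A * g A +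
        p e * ∑ A ∈ R.powerset, wt p R A * g (insert e A) := by
  rw [Finset.sum_powerset_insert he, Finset.mul_sum, Finset.mul_sum]
  congr 1
  · apply Finset.sum_congr rfl
    intro A hA
    rw [Finset.mem_powerset] at hA
    have heA : e ∉ A := fun h => he (hA h)
    have hset : (insert e R) \ A = insert e (R \ A) := by
      ext x
      simp only [Finset.mem_sdiff, Finset.mem_insert]
      constructor
      · rintro ⟨rfl | hxR, hxA⟩
        · exact Or.inl rfl
        · exact Or.inr ⟨hxR, hxA⟩
      · rintro (rfl | ⟨hxR, hxA⟩)
        · exact ⟨Or.inl rfl, heA⟩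
        · exact ⟨Or.inr hxR, hxA⟩
    have heRA : e ∉ R \ A := fun h => he (Finset.mem_sdiff.mp h).1
    rw [wt, wt, hset, Finset.prod_insert heRA]
    ring
  · apply Finset.sum_congr rfl
    intro A hA
    rw [Finset.mem_powerset] at hA
    have heA : e ∉ A := fun h => he (hA h)
    have hset : (insert e R) \ (insert e A) = R \ A := by
      ext x
      simp only [Finset.mem_sdiff, Finset.mem_insert, not_or]
      constructor
      · rintro ⟨rfl | hxR, hxe, hxA⟩
        · exact absurd rfl hxe
        · exact ⟨hxR, hxA⟩
      · rintro ⟨hxR, hxA⟩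
        exact ⟨Or.inr hxR, fun hxe => he (hxe ▸ hxR), hxA⟩
    rw [wt, wt, hset, Finset.prod_insert heA]
    ring

lemma scalar_ineq {x s q : ℝ} (hx : -1 ≤ x) (hs0 : 0 ≤ s) (hs1 : s ≤ 1)
    (hq0 : 0 ≤ q) (hq1 : q ≤ 1) :
    q * (1 + x) + (1 - q) * Real.exp (x * s) ≤ Real.exp (x * (q + (1 - q) * s)) := by
  have h1 : 1 + x * s ≤ Real.exp (x * s) := by linarith [Real.add_one_le_exp (x * s)]
  have h2 : 1 + x * q * (1 - s) ≤ Real.exp (x * q * (1 - s)) := by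
    linarith [Real.add_one_le_exp (x * q * (1 - s))]
  have hfac : 0 ≤ 1 + x * (1 - s) := by nlinarith
  have hE : 0 < Real.exp (x * s) := Real.exp_pos _
  have key : 1 + x ≤ Real.exp (x * s) * (1 + x * (1 - s)) := by
    nlinarith [mul_le_mul_of_nonneg_right h1 hfac, mul_nonneg (mul_nonneg (sq_nonneg x) hs0)
      (by linarith : (0:ℝ) ≤ 1 - s)]
  have hsplit : Real.exp (x * (q + (1 - q) * s)) =
      Real.exp (x * s) * Real.exp (x * q * (1 - s)) := by
    rw [← Real.exp_add]
    congr 1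
    ring
  rw [hsplit]
  nlinarith [mul_le_mul_of_nonneg_left key hq0, mul_le_mul_of_nonneg_left h2 hE.le]

lemma exp_neg_le_quadratic {δ : ℝ} (h0 : 0 ≤ δ) : Real.exp (-δ) ≤ 1 - δ + δ ^ 2 / 2 := by
  have h1 : 1 + δ + δ ^ 2 / 2 ≤ Real.exp δ := by
    have h := Real.sum_le_exp_of_nonneg h0 3
    simp [Finset.sum_range_succ, Nat.factorial] at h
    nlinarith [h]
  have h3 : 0 < Real.exp (-δ) := Real.exp_pos _
  have h2 : Real.exp (-δ) * Real.exp δ = 1 := by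
    rw [← Real.exp_add]; simp
  have h4 : Real.exp (-δ) * (1 + δ + δ ^ 2 / 2) ≤ 1 := by
    calc Real.exp (-δ) * (1 + δ + δ ^ 2 / 2) ≤ Real.exp (-δ) * Real.exp δ :=
          mul_le_mul_of_nonneg_left h1 h3.le
      _ = 1 := h2
  nlinarith [h4, h3, sq_nonneg (δ * δ)]

lemma mgf_bound (M : FinMatroid α) {p : α → ℝ} (hp : ∀ e, 0 ≤ p e ∧ p e ≤ 1)
    {t : ℝ} (ht : 0 ≤ t) (R : Finset α) :
    ∀ C : Finset α,
      ∑ A ∈ R.powerset, wt p R A * Real.exp (-t * (M.rank (A ∪ C) : ℝ)) ≤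
        Real.exp (-t * (M.rank C : ℝ) + (Real.exp (-t) - 1) *
          ((∑ A ∈ R.powerset, wt p R A * (M.rank (A ∪ C) : ℝ)) - (M.rank C : ℝ))) := by
  induction R using Finset.induction_on with
  | empty =>
    intro C
    simp [wt]
  | @insert e R he ih =>
    intro C
    have hsplitE := wt_split (p := p) he (fun A => Real.exp (-t * (M.rank (A ∪ C) : ℝ)))
    have hsplitR := wt_split (p := p) he (fun A => ((M.rank (A ∪ C) : ℝ)))
    beta_reduce at hsplitE hsplitR
    rw [hsplitE, hsplitR]
    have hre : ∀ A : Finset α, (insert e A) ∪ C = A ∪ insert e C := by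
      intro A
      rw [Finset.insert_union, Finset.union_insert]
    simp only [hre]
    set c : ℝ := Real.exp (-t) - 1 with hc
    set r : ℝ := (M.rank C : ℝ) with hr
    set S0 := ∑ A ∈ R.powerset, wt p R A * Real.exp (-t * (M.rank (A ∪ C) : ℝ)) with hS0def
    set S1 := ∑ A ∈ R.powerset, wt p R A * Real.exp (-t * (M.rank (A ∪ insert e C) : ℝ))
      with hS1def
    set μ0 := ∑ A ∈ R.powerset, wt p R A * (M.rank (A ∪ C) : ℝ) with hμ0def
    set μ1 := ∑ A ∈ R.powerset, wt p R A * (M.rank (A ∪ insert e C) : ℝ) with hμ1def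
    have hpe0 := (hp e).1
    have hpe1 := (hp e).2
    have hS0 := ih C
    have hS1 := ih (insert e C)
    -- basic bounds on μ0, μ1
    have hμ01 : μ0 ≤ μ1 := by
      apply Finset.sum_le_sum
      intro A hA
      have : (M.rank (A ∪ C) : ℝ) ≤ (M.rank (A ∪ insert e C) : ℝ) := by
        exact_mod_cast M.rank_mono (Finset.union_subset_union_right (Finset.subset_insert e C))
      nlinarith [wt_nonneg hp R A]
    have hμ10 : μ1 ≤ μ0 + 1 := by
      have h5 : μ1 ≤ ∑ A ∈ R.powerset, (wt p R A * (M.rank (A ∪ C) : ℝ) + wt p R A) := by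
        apply Finset.sum_le_sum
        intro A hA
        have : (M.rank (A ∪ insert e C) : ℝ) ≤ (M.rank (A ∪ C) : ℝ) + 1 := by
          rw [Finset.union_insert]
          exact_mod_cast M.rank_insert_le e (A ∪ C)
        nlinarith [wt_nonneg hp R A]
      rwa [Finset.sum_add_distrib, wt_sum p R] at h5
    have hμ0r : r ≤ μ0 := by
      have h5 : ∑ A ∈ R.powerset, wt p R A * r ≤ μ0 := by
        apply Finset.sum_le_sum
        intro A hA
        have : r ≤ ((M.rank (A ∪ C) : ℕ) : ℝ) := by
          rw [hr]
          exact_mod_cast M.rank_mono Finset.subset_union_right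
        nlinarith [wt_nonneg hp R A]
      rwa [← Finset.sum_mul, wt_sum p R, one_mul] at h5
    -- dichotomy for rank of insert e C
    have hdich : M.rank (insert e C) = M.rank C ∨ M.rank (insert e C) = M.rank C + 1 := by
      have h6 := M.rank_mono (Finset.subset_insert e C)
      have h7 := M.rank_insert_le e C
      omega
    rcases hdich with hEq | hSucc
    · -- rank doesn't grow: everything collapses
      have hpt : ∀ A : Finset α, M.rank (A ∪ insert e C) = M.rank (A ∪ C) := by
        intro A
        rw [Finset.union_insert]
        exact M.rank_insert_eq_of_subset Finset.subset_union_right hEq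
      have hS1eq : S1 = S0 := by
        rw [hS1def, hS0def]
        apply Finset.sum_congr rfl
        intro A _
        rw [hpt A]
      have hμ1eq : μ1 = μ0 := by
        rw [hμ1def, hμ0def]
        apply Finset.sum_congr rfl
        intro A _
        rw [hpt A]
      rw [hS1eq, hμ1eq]
      have harg : -t * r + c * ((1 - p e) * μ0 + p e * μ0 - r) = -t * r + c * (μ0 - r) := by
        ring
      rw [harg]
      calc (1 - p e) * S0 + p e * S0 = S0 := by ring
        _ ≤ Real.exp (-t * r + c * (μ0 - r)) := hS0
    · -- rank grows by one
      have hr1 : (M.rank (insert e C) : ℝ) = r + 1 := by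
        rw [hr, hSucc]
        push_cast
        ring
      have hμ1r : r + 1 ≤ μ1 := by
        have h5 : ∑ A ∈ R.powerset, wt p R A * (r + 1) ≤ μ1 := by
          apply Finset.sum_le_sum
          intro A hA
          have : r + 1 ≤ ((M.rank (A ∪ insert e C) : ℕ) : ℝ) := by
            rw [← hr1]
            exact_mod_cast M.rank_mono Finset.subset_union_right
          nlinarith [wt_nonneg hp R A]
        rwa [← Finset.sum_mul, wt_sum p R, one_mul] at h5
      set s : ℝ := μ0 - μ1 + 1 with hs
      set b : ℝ := μ1 - r - 1 with hb
      have hx : (-1 : ℝ) ≤ c := by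
        have := Real.exp_pos (-t)
        rw [hc]; linarith
      have hs0 : 0 ≤ s := by rw [hs]; linarith
      have hs1 : s ≤ 1 := by rw [hs]; linarith
      have hscalar := scalar_ineq hx hs0 hs1 hpe0 hpe1
      set B : ℝ := -t * r + c * b with hB
      have hEB : 0 < Real.exp B := Real.exp_pos _
      have hmain := mul_le_mul_of_nonneg_left hscalar hEB.le
      -- identify the three exponential products
      have e0 : Real.exp B * Real.exp (c * s) = Real.exp (-t * r + c * (μ0 - r)) := by
        rw [← Real.exp_add]
        congr 1
        rw [hB, hb, hs]
        ring
      have e1 : Real.exp B * (1 + c) =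
          Real.exp (-t * (M.rank (insert e C) : ℝ) + c * (μ1 - (M.rank (insert e C) : ℝ))) := by
        have : (1 : ℝ) + c = Real.exp (-t) := by rw [hc]; ring
        rw [this, ← Real.exp_add]
        congr 1
        rw [hr1, hB, hb]
        ring
      have e2 : Real.exp B * Real.exp (c * (p e + (1 - p e) * s)) =
          Real.exp (-t * r + c * ((1 - p e) * μ0 + p e * μ1 - r)) := by
        rw [← Real.exp_add]
        congr 1
        rw [hB, hb, hs]
        ring
      -- combine
      calc (1 - p e) * S0 + p e * S1
          ≤ (1 - p e) * Real.exp (-t * r + c * (μ0 - r)) +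
            p e * Real.exp (-t * (M.rank (insert e C) : ℝ) +
              c * (μ1 - (M.rank (insert e C) : ℝ))) := by
            apply add_le_add
            · exact mul_le_mul_of_nonneg_left hS0 (by linarith)
            · exact mul_le_mul_of_nonneg_left hS1 hpe0
        _ = Real.exp B * (p e * (1 + c) + (1 - p e) * Real.exp (c * s)) := by
            rw [← e0, ← e1]
            ring
        _ ≤ Real.exp B * Real.exp (c * (p e + (1 - p e) * s)) := hmain
        _ = Real.exp (-t * r + c * ((1 - p e) * μ0 + p e * μ1 - r)) := e2

end Aux

/-- Lower-tail concentration for the rank of a random subset: if each element `e` is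
included in `S` independently with probability `p e`, then for any `δ ∈ (0,1)`,
`Pr[rank(S) ≤ (1-δ)·E[rank(S)]] ≤ exp(-δ² E[rank(S)] / 2)`. -/
theorem rank_lower_tail {α : Type*} [DecidableEq α] [Fintype α]
    (M : FinMatroid α) (p : α → ℝ) (hp : ∀ e, 0 ≤ p e ∧ p e ≤ 1)
    (δ : ℝ) (hδ0 : 0 < δ) (hδ1 : δ < 1) :
    (∑ A : Finset α,
        if (M.rank A : ℝ) ≤ (1 - δ) * expRank M p then subsetWeight p A else 0) ≤
      Real.exp (-(δ ^ 2) * expRank M p / 2) := by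
  have hw : ∀ A : Finset α, subsetWeight p A = wt p Finset.univ A := fun A => rfl
  have hwnn : ∀ A : Finset α, 0 ≤ subsetWeight p A := by
    intro A
    rw [hw A]
    exact wt_nonneg hp _ _
  set μ : ℝ := expRank M p with hμdef
  have hμ0 : 0 ≤ μ := by
    rw [hμdef, expRank]
    apply Finset.sum_nonneg
    intro A _
    exact mul_nonneg (hwnn A) (Nat.cast_nonneg _)
  -- MGF bound specialized
  have hmgf := mgf_bound M hp hδ0.le Finset.univ ∅
  rw [Finset.powerset_univ] at hmgf
  simp only [Finset.union_empty, M.rank_empty, Nat.cast_zero, mul_zero, neg_zero,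
    sub_zero, zero_add] at hmgf
  have hexpRank : ∑ A ∈ Finset.univ, wt p Finset.univ A * (M.rank A : ℝ) = μ := by
    rw [hμdef, expRank]
    apply Finset.sum_congr rfl
    intro A _
    rw [hw A]
  rw [hexpRank] at hmgf
  -- hmgf : ∑ A ∈ univ, wt p univ A * exp (-δ * rank A) ≤ exp ((exp (-δ) - 1) * μ)
  have step1 : (∑ A : Finset α,
      if (M.rank A : ℝ) ≤ (1 - δ) * μ then subsetWeight p A else 0) ≤
      ∑ A : Finset α, subsetWeight p A *
        (Real.exp (δ * (1 - δ) * μ) * Real.exp (-δ * (M.rank A : ℝ))) := by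
    apply Finset.sum_le_sum
    intro A _
    split_ifs with hA
    · have h1 : 1 ≤ Real.exp (δ * (1 - δ) * μ) * Real.exp (-δ * (M.rank A : ℝ)) := by
        rw [← Real.exp_add]
        apply Real.one_le_exp
        nlinarith
      calc subsetWeight p A = subsetWeight p A * 1 := by ring
        _ ≤ _ := mul_le_mul_of_nonneg_left h1 (hwnn A)
    · exact mul_nonneg (hwnn A) (mul_nonneg (Real.exp_pos _).le (Real.exp_pos _).le)
  have step2 : ∑ A : Finset α, subsetWeight p A *
        (Real.exp (δ * (1 - δ) * μ) * Real.exp (-δ * (M.rank A : ℝ))) =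
      Real.exp (δ * (1 - δ) * μ) *
        ∑ A ∈ Finset.univ, wt p Finset.univ A * Real.exp (-δ * (M.rank A : ℝ)) := by
    rw [Finset.mul_sum]
    apply Finset.sum_congr rfl
    intro A _
    rw [hw A]
    ring
  have step3 : Real.exp (δ * (1 - δ) * μ) *
        (∑ A ∈ Finset.univ, wt p Finset.univ A * Real.exp (-δ * (M.rank A : ℝ))) ≤
      Real.exp (δ * (1 - δ) * μ) * Real.exp ((Real.exp (-δ) - 1) * μ) :=
    mul_le_mul_of_nonneg_left hmgf (Real.exp_pos _).le
  have step4 : Real.exp (δ * (1 - δ) * μ) * Real.exp ((Real.exp (-δ) - 1) * μ) ≤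
      Real.exp (-(δ ^ 2) * μ / 2) := by
    rw [← Real.exp_add]
    apply Real.exp_le_exp.mpr
    have hq := exp_neg_le_quadratic hδ0.le
    nlinarith [hq, hμ0]
  calc (∑ A : Finset α,
      if (M.rank A : ℝ) ≤ (1 - δ) * μ then subsetWeight p A else 0)
      ≤ _ := step1
    _ = _ := step2
    _ ≤ _ := step3
    _ ≤ _ := step4
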